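/- arXiv:math/0309448 — 2 statements merged into one kernel-verified Lean document; each statement's English description precedes it below -/
import Mathlib

section
/- Suppose A is a right H-comodule algebra with B = A^{co H} and γ : H → A is a convolution-invertible H-comodule map with γ(1) = 1. Define σ'(h ⊗ g) = Σ γ(h₍₁₎) γ(g₍₁₎) γ⁻¹(h₍₂₎ g₍₂₎). Then σ'(h ⊗ g) ∈ B for all h, g ∈ H, the induced map σ : H ⊗ H → B is convolution invertible with inverse induced by ω'(h ⊗ g) = Σ γ(h₍₁₎ g₍₁₎) γ⁻¹(g₍₂₎) γ⁻¹(h₍₂₎), and σ satisfies the 2-cocycle condition and normalization σ(h,1) = σ(1,h) = ε(h)1_B with respect to the weak action h·b = Σ γ(h₍₁₎) b γ⁻¹(h₍₂₎). -/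
open TensorProduct LinearMap

noncomputable section

namespace CrossedGalois

/-- Convolution product of two linear maps from a coalgebra to an algebra. -/
def conv (k : Type) [Field k] {C B : Type} [AddCommGroup C] [Module k C] [Coalgebra k C]
    [Ring B] [Algebra k B] (f g : C →ₗ[k] B) : C →ₗ[k] B :=
  (LinearMap.mul' k B) ∘ₗ (TensorProduct.map f g) ∘ₗ (Coalgebra.comul (R := k))

/-- The unit `η ∘ ε` for the convolution product. -/
def convOne (k : Type) [Field k] (C B : Type) [AddCommGroup C] [Module k C] [Coalgebra k C]
    [Ring B] [Algebra k B] : C →ₗ[k] B :=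
  (Algebra.linearMap k B) ∘ₗ (Coalgebra.counit (R := k))

/-- Convolution invertibility. -/
def ConvInvertible (k : Type) [Field k] {C B : Type} [AddCommGroup C] [Module k C]
    [Coalgebra k C] [Ring B] [Algebra k B] (f : C →ₗ[k] B) : Prop :=
  ∃ g : C →ₗ[k] B, conv k f g = convOne k C B ∧ conv k g f = convOne k C B

variable (k : Type) [Field k]

section CrossedProduct

variable (B H : Type) [Ring B] [Algebra k B] [Ring H] [Bialgebra k H]

/-- `h ↦ α (h ⊗ b)`. -/
def actOn (α : H ⊗[k] B →ₗ[k] B) (b : B) : H →ₗ[k] B :=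
  α ∘ₗ ((TensorProduct.mk k H B).flip b)

/-- `α` is a weak action of the bialgebra `H` on the algebra `B` :
`h · (ab) = Σ (h₁ · a)(h₂ · b)` and `h · 1 = ε(h) 1`. -/
structure IsWeakAction (α : H ⊗[k] B →ₗ[k] B) : Prop where
  smul_mul : ∀ (h : H) (a b : B),
    α (h ⊗ₜ (a * b)) =
      LinearMap.mul' k B ((TensorProduct.map α α)
        ((TensorProduct.tensorTensorTensorComm k H H B B)
          ((Coalgebra.comul (R := k) h) ⊗ₜ (a ⊗ₜ b))))
  smul_one : ∀ h : H, α (h ⊗ₜ (1 : B)) = (Coalgebra.counit (R := k) h) • (1 : B)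

/-- The 2-cocycle condition
`Σ (h₁ · σ(g₁,l₁)) σ(h₂, g₂l₂) = Σ σ(h₁,g₁) σ(h₂g₂, l)`
together with the normalisation `σ(h,1) = σ(1,h) = ε(h)1`. -/
structure IsCocycle (α : H ⊗[k] B →ₗ[k] B) (σ : H ⊗[k] H →ₗ[k] B) : Prop where
  cocycle :
    conv k (α ∘ₗ lTensor H σ) (σ ∘ₗ lTensor H (LinearMap.mul' k H)) =
    conv k (σ ∘ₗ lTensor H ((TensorProduct.rid k H).toLinearMap ∘ₗ
              lTensor H (Coalgebra.counit (R := k))))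
           (σ ∘ₗ (rTensor H (LinearMap.mul' k H)) ∘ₗ
              (TensorProduct.assoc k H H H).symm.toLinearMap)
  norm_right : ∀ h : H, σ (h ⊗ₜ (1 : H)) = (Coalgebra.counit (R := k) h) • (1 : B)
  norm_left : ∀ h : H, σ ((1 : H) ⊗ₜ h) = (Coalgebra.counit (R := k) h) • (1 : B)

/-- `B` is a twisted `H`-module:  `1 · b = b` and
`Σ (h₁ · (g₁ · b)) σ(h₂,g₂) = Σ σ(h₁,g₁) ((h₂g₂) · b)`. -/
structure IsTwistedModule (α : H ⊗[k] B →ₗ[k] B) (σ : H ⊗[k] H →ₗ[k] B) : Prop where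
  one_smul : ∀ b : B, α ((1 : H) ⊗ₜ b) = b
  twisted : ∀ b : B,
    conv k (α ∘ₗ lTensor H (actOn k B H α b)) σ =
    conv k σ ((actOn k B H α b) ∘ₗ LinearMap.mul' k H)

/-- The multiplication of the crossed product `B #_σ H`:
`(a # h)(b # g) = Σ a (h₁·b) σ(h₂,g₁) # h₃g₂`. -/
def cpMul (α : H ⊗[k] B →ₗ[k] B) (σ : H ⊗[k] H →ₗ[k] B) :
    (B ⊗[k] H) ⊗[k] (B ⊗[k] H) →ₗ[k] B ⊗[k] H :=
  (rTensor H (LinearMap.mul' k B)) ∘ₗ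
  (TensorProduct.assoc k B B H).symm.toLinearMap ∘ₗ
  (lTensor B
    ((rTensor H (LinearMap.mul' k B)) ∘ₗ
     (TensorProduct.assoc k B B H).symm.toLinearMap ∘ₗ
     (TensorProduct.map α (TensorProduct.map σ (LinearMap.mul' k H))) ∘ₗ
     (lTensor (H ⊗[k] B) (TensorProduct.tensorTensorTensorComm k H H H H).toLinearMap) ∘ₗ
     (TensorProduct.tensorTensorTensorComm k H (H ⊗[k] H) B (H ⊗[k] H)).toLinearMap ∘ₗ
     (TensorProduct.map ((lTensor H (Coalgebra.comul (R := k))) ∘ₗ (Coalgebra.comul (R := k)))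
       (lTensor B (Coalgebra.comul (R := k)))))) ∘ₗ
  (TensorProduct.assoc k B H (B ⊗[k] H)).toLinearMap

/-- The unit `1 # 1` of the crossed product. -/
def cpOne : B ⊗[k] H := (1 : B) ⊗ₜ (1 : H)

/-- The crossed product multiplication is associative with unit `1 ⊗ 1`. -/
def IsCpAlgebra (α : H ⊗[k] B →ₗ[k] B) (σ : H ⊗[k] H →ₗ[k] B) : Prop :=
  (∀ x y z : B ⊗[k] H,
      cpMul k B H α σ ((cpMul k B H α σ (x ⊗ₜ y)) ⊗ₜ z) =
      cpMul k B H α σ (x ⊗ₜ (cpMul k B H α σ (y ⊗ₜ z)))) ∧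
  (∀ x : B ⊗[k] H, cpMul k B H α σ ((cpOne k B H) ⊗ₜ x) = x) ∧
  (∀ x : B ⊗[k] H, cpMul k B H α σ (x ⊗ₜ (cpOne k B H)) = x)

/-- The right `H`-coaction `id_B ⊗ Δ` on `B ⊗ H`. -/
def cpCoact : B ⊗[k] H →ₗ[k] (B ⊗[k] H) ⊗[k] H :=
  (TensorProduct.assoc k B H H).symm.toLinearMap ∘ₗ lTensor B (Coalgebra.comul (R := k))

end CrossedProduct

section Galois

variable (H : Type) [Ring H] [Bialgebra k H]

/-- The submodule of `A ⊗ A` spanned by `xb ⊗ y - x ⊗ by` for `b` in a given subset `S`,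
with respect to a given multiplication map `M`; its quotient is `A ⊗_B A`. -/
def midRel {A : Type} [AddCommGroup A] [Module k A]
    (M : A ⊗[k] A →ₗ[k] A) (S : Set A) : Submodule k (A ⊗[k] A) :=
  Submodule.span k {z | ∃ x y b, b ∈ S ∧
    z = (M (x ⊗ₜ b)) ⊗ₜ y - x ⊗ₜ (M (b ⊗ₜ y))}

/-- The map `can' : A ⊗ A → A ⊗ H`, `x ⊗ y ↦ Σ x y₍₀₎ ⊗ y₍₁₎`. -/
def canMap {A : Type} [AddCommGroup A] [Module k A]
    (M : A ⊗[k] A →ₗ[k] A) (ρ : A →ₗ[k] A ⊗[k] H) : A ⊗[k] A →ₗ[k] A ⊗[k] H :=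
  (rTensor H M) ∘ₗ (TensorProduct.assoc k A A H).symm.toLinearMap ∘ₗ (lTensor A ρ)

/-- The extension is `H`-Galois: the canonical map descends to a bijection
`A ⊗_B A → A ⊗ H`. -/
def IsGalois {A : Type} [AddCommGroup A] [Module k A]
    (M : A ⊗[k] A →ₗ[k] A) (ρ : A →ₗ[k] A ⊗[k] H) (S : Set A) : Prop :=
  ∃ can : ((A ⊗[k] A) ⧸ midRel k M S) →ₗ[k] A ⊗[k] H,
    can ∘ₗ (midRel k M S).mkQ = canMap k H M ρ ∧ Function.Bijective can

/-- `A` is a right `H`-comodule algebra. -/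
structure IsComodAlg {A : Type} [Ring A] [Algebra k A]
    (ρ : A →ₗ[k] A ⊗[k] H) : Prop where
  coassoc : ∀ a : A, (rTensor H ρ) (ρ a) =
    (TensorProduct.assoc k A H H).symm ((lTensor A (Coalgebra.comul (R := k))) (ρ a))
  counit_id : ∀ a : A,
    (TensorProduct.rid k A) ((lTensor A (Coalgebra.counit (R := k))) (ρ a)) = a
  mul : ∀ a b : A, ρ (a * b) = ρ a * ρ b
  one : ρ 1 = 1

end Galois

end CrossedGalois

namespace CrossedGalois

/-- `h ⊗ a ↦ Σ γ(h₁) a μ(h₂)`. -/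
def actL (k A H : Type) [Field k] [Ring A] [Algebra k A] [Ring H] [Bialgebra k H]
    (γ μ : H →ₗ[k] A) : H ⊗[k] A →ₗ[k] A :=
  (LinearMap.mul' k A) ∘ₗ (lTensor A (LinearMap.mul' k A)) ∘ₗ
  (TensorProduct.map γ (lTensor A μ)) ∘ₗ
  (lTensor H (TensorProduct.comm k H A).toLinearMap) ∘ₗ
  (TensorProduct.assoc k H H A).toLinearMap ∘ₗ
  (rTensor A (Coalgebra.comul (R := k)))

/-- `σ(h,g) = Σ γ(h₁) γ(g₁) μ(h₂ g₂)`. -/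
def sigMap (k A H : Type) [Field k] [Ring A] [Algebra k A] [Ring H] [Bialgebra k H]
    (γ μ : H →ₗ[k] A) : H ⊗[k] H →ₗ[k] A :=
  conv k ((LinearMap.mul' k A) ∘ₗ TensorProduct.map γ γ) (μ ∘ₗ LinearMap.mul' k H)

/-- `ω(h,g) = Σ γ(h₁ g₁) μ(g₂) μ(h₂)`. -/
def omgMap (k A H : Type) [Field k] [Ring A] [Algebra k A] [Ring H] [Bialgebra k H]
    (γ μ : H →ₗ[k] A) : H ⊗[k] H →ₗ[k] A :=
  conv k (γ ∘ₗ LinearMap.mul' k H)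
    ((LinearMap.mul' k A) ∘ₗ (TensorProduct.map μ μ) ∘ₗ (TensorProduct.comm k H H).toLinearMap)

end CrossedGalois

namespace CrossedGalois

namespace Kit

open Coalgebra

variable {k : Type} [Field k]

section Generic
variable {C D A A' : Type}
  [AddCommGroup C] [Module k C] [Coalgebra k C]
  [AddCommGroup D] [Module k D] [Coalgebra k D]
  [Ring A] [Algebra k A] [Ring A'] [Algebra k A']

/-- unbundled coalgebra morphism -/
structure IsCoalgHom (φ : C →ₗ[k] D) : Prop where
  counit_comp : (counit (R := k)) ∘ₗ φ = counit
  comul_comp : (comul (R := k)) ∘ₗ φ = (TensorProduct.map φ φ) ∘ₗ (comul (R := k))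

theorem conv_def (f g : C →ₗ[k] A) :
    conv k f g = (LinearMap.mul' k A) ∘ₗ (TensorProduct.map f g) ∘ₗ (comul (R := k)) := rfl

theorem conv_apply' (f g : C →ₗ[k] A) (x : C) :
    conv k f g x = (mul' k A) ((TensorProduct.map f g) (comul (R := k) x)) := rfl

theorem conv_assoc (f g h : C →ₗ[k] A) :
    conv k (conv k f g) h = conv k f (conv k g h) := by
  have e1 : TensorProduct.map (conv k f g) h =
      ((rTensor A (mul' k A)) ∘ₗ (rTensor A (TensorProduct.map f g)) ∘ₗ
        (lTensor (C ⊗[k] C) h)) ∘ₗ (rTensor C (comul (R := k))) := by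
    ext c c'
    simp [conv, mul'_apply]
  have e2 : TensorProduct.map f (conv k g h) =
      ((lTensor A (mul' k A)) ∘ₗ (lTensor A (TensorProduct.map g h)) ∘ₗ
        (rTensor (C ⊗[k] C) f)) ∘ₗ (lTensor C (comul (R := k))) := by
    ext c c'
    simp [conv, mul'_apply]
  have bridge : (mul' k A) ∘ₗ (((rTensor A (mul' k A)) ∘ₗ (rTensor A (TensorProduct.map f g)) ∘ₗ
        (lTensor (C ⊗[k] C) h)) ∘ₗ (TensorProduct.assoc k C C C).symm.toLinearMap)
      = (mul' k A) ∘ₗ ((lTensor A (mul' k A)) ∘ₗ (lTensor A (TensorProduct.map g h)) ∘ₗ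
        (rTensor (C ⊗[k] C) f)) := by
    ext c₁ c₂ c₃
    simp [mul'_apply, mul_assoc]
  apply LinearMap.ext; intro x
  have l1 : conv k (conv k f g) h x
      = (mul' k A) (((rTensor A (mul' k A)) ∘ₗ (rTensor A (TensorProduct.map f g)) ∘ₗ
        (lTensor (C ⊗[k] C) h)) ((rTensor C (comul (R := k))) (comul (R := k) x))) := by
    rw [conv_apply', e1]; rfl
  have l2 : conv k f (conv k g h) x
      = (mul' k A) (((lTensor A (mul' k A)) ∘ₗ (lTensor A (TensorProduct.map g h)) ∘ₗ
        (rTensor (C ⊗[k] C) f)) ((lTensor C (comul (R := k))) (comul (R := k) x))) := by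
    rw [conv_apply', e2]; rfl
  rw [l1, l2, ← coassoc_symm_apply x]
  exact LinearMap.congr_fun bridge ((lTensor C (comul (R := k))) (comul (R := k) x))

theorem conv_one (f : C →ₗ[k] A) : conv k f (convOne k C A) = f := by
  have e1 : TensorProduct.map f ((Algebra.linearMap k A) ∘ₗ (counit (R := k)))
      = (lTensor A (Algebra.linearMap k A)) ∘ₗ (rTensor k f) ∘ₗ (lTensor C (counit (R := k) (A := C))) := by
    ext c c'; simp
  apply LinearMap.ext; intro x
  have : conv k f (convOne k C A) x
      = ((mul' k A) ∘ₗ (lTensor A (Algebra.linearMap k A)) ∘ₗ (rTensor k f))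
          ((lTensor C (counit (R := k))) (comul (R := k) x)) := by
    rw [conv_apply']; rw [show convOne k C A = (Algebra.linearMap k A) ∘ₗ (counit (R := k)) from rfl, e1]; rfl
  rw [this, lTensor_counit_comul x]
  simp [mul'_apply]

theorem one_conv (f : C →ₗ[k] A) : conv k (convOne k C A) f = f := by
  have e1 : TensorProduct.map ((Algebra.linearMap k A) ∘ₗ (counit (R := k))) f
      = (rTensor A (Algebra.linearMap k A)) ∘ₗ (lTensor k f) ∘ₗ (rTensor C (counit (R := k) (A := C))) := by
    ext c c'; simp
  apply LinearMap.ext; intro x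
  have : conv k (convOne k C A) f x
      = ((mul' k A) ∘ₗ (rTensor A (Algebra.linearMap k A)) ∘ₗ (lTensor k f))
          ((rTensor C (counit (R := k))) (comul (R := k) x)) := by
    rw [conv_apply']; rw [show convOne k C A = (Algebra.linearMap k A) ∘ₗ (counit (R := k)) from rfl, e1]; rfl
  rw [this, rTensor_counit_comul x]
  simp [mul'_apply, Algebra.smul_def]

theorem conv_comp {φ : C →ₗ[k] D} (hφ : IsCoalgHom φ) (f g : D →ₗ[k] A) :
    conv k (f ∘ₗ φ) (g ∘ₗ φ) = (conv k f g) ∘ₗ φ := by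
  rw [conv_def, conv_def, TensorProduct.map_comp]
  simp only [LinearMap.comp_assoc]
  rw [hφ.comul_comp]

theorem one_comp {φ : C →ₗ[k] D} (hφ : IsCoalgHom φ) :
    (convOne k D A) ∘ₗ φ = convOne k C A := by
  rw [convOne, convOne, LinearMap.comp_assoc, hφ.counit_comp]

theorem comp_conv {Φ : A →ₗ[k] A'} (hm : ∀ x y : A, Φ (x * y) = Φ x * Φ y)
    (f g : C →ₗ[k] A) : Φ ∘ₗ conv k f g = conv k (Φ ∘ₗ f) (Φ ∘ₗ g) := by
  have e1 : Φ ∘ₗ mul' k A = mul' k A' ∘ₗ TensorProduct.map Φ Φ := by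
    ext x y; simp [mul'_apply, hm]
  rw [conv_def, conv_def, TensorProduct.map_comp]
  simp only [← LinearMap.comp_assoc]
  rw [e1]

theorem comp_one {Φ : A →ₗ[k] A'} (h1 : Φ 1 = 1) :
    Φ ∘ₗ convOne k C A = convOne k C A' := by
  apply LinearMap.ext; intro x
  simp [convOne, Algebra.algebraMap_eq_smul_one, h1]

theorem conv_conv_cancel {a b c d : C →ₗ[k] A} (hbc : conv k b c = convOne k C A) :
    conv k (conv k a b) (conv k c d) = conv k a d := by
  rw [conv_assoc, ← conv_assoc b c d, hbc, one_conv]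

theorem conv_exchange {a b c d : C →ₗ[k] A} (hbc : conv k b c = conv k c b) :
    conv k (conv k a b) (conv k c d) = conv k (conv k a c) (conv k b d) := by
  rw [conv_assoc, ← conv_assoc b c d, hbc, conv_assoc c b d, ← conv_assoc]

theorem conv4_reduce {a b c d : C →ₗ[k] A} :
    conv k (conv k a b) (conv k c d) = conv k a (conv k (conv k b c) d) := by
  rw [conv_assoc, ← conv_assoc b c d]

theorem cocycle_words (A1 A2 A3 G23 A12 U1 U23 U12 UAll : C →ₗ[k] A)
    (h1 : conv k U1 A1 = convOne k C A)
    (h2 : conv k U23 G23 = convOne k C A)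
    (h3 : conv k U12 A12 = convOne k C A) :
    conv k (conv k (conv k A1 (conv k (conv k A2 A3) U23)) U1) (conv k (conv k A1 G23) UAll)
      = conv k (conv k (conv k A1 A2) U12) (conv k (conv k A12 A3) UAll) := by
  rw [conv4_reduce, ← conv_assoc U1 A1 G23, h1, one_conv,
      conv4_reduce, conv_assoc (conv k A2 A3) U23 G23, h2, conv_one,
      conv4_reduce (a := conv k A1 A2), ← conv_assoc U12 A12 A3, h3, one_conv,
      conv_assoc A2 A3 UAll, ← conv_assoc A1 A2 (conv k A3 UAll)]

end Generic

section Tens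
variable {C D A : Type}
  [AddCommGroup C] [Module k C] [Coalgebra k C]
  [AddCommGroup D] [Module k D] [Coalgebra k D]
  [Ring A] [Algebra k A]

/-- `c ⊗ d ↦ ε(d) • c`. -/
def pFst : C ⊗[k] D →ₗ[k] C :=
  (TensorProduct.rid k C).toLinearMap ∘ₗ lTensor C (counit (R := k) (A := D))

/-- `c ⊗ d ↦ ε(c) • d`. -/
def pSnd : C ⊗[k] D →ₗ[k] D :=
  (TensorProduct.lid k D).toLinearMap ∘ₗ rTensor D (counit (R := k) (A := C))

@[simp] theorem pFst_tmul (c : C) (d : D) :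
    (pFst (k := k)) (c ⊗ₜ d) = (counit (R := k) d) • c := by simp [pFst]

@[simp] theorem pSnd_tmul (c : C) (d : D) :
    (pSnd (k := k)) (c ⊗ₜ d) = (counit (R := k) c) • d := by simp [pSnd]

theorem counit_comul_eq (x : C) :
    (mul' k k) ((TensorProduct.map (counit (R := k)) (counit (R := k))) (comul (R := k) x))
      = counit (R := k) x := by
  rw [← LinearMap.lTensor_comp_rTensor (g := (counit (R := k) (A := C)))
      (f := (counit (R := k) (A := C))), LinearMap.comp_apply,
    Coalgebra.rTensor_counit_comul]
  simp [mul'_apply]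

theorem comul_tens :
    (comul (R := k) (A := C ⊗[k] D))
      = (TensorProduct.tensorTensorTensorComm k C C D D).toLinearMap ∘ₗ
        TensorProduct.map (comul (R := k)) (comul (R := k)) := rfl

theorem counit_tens :
    (counit (R := k) (A := C ⊗[k] D))
      = (mul' k k) ∘ₗ TensorProduct.map (counit (R := k)) (counit (R := k)) := by
  apply TensorProduct.ext'; intro c d; simp [mul'_apply, mul_comm]

theorem pFst_comp_comul : (pFst (k := k) (C := C) (D := C)) ∘ₗ (comul (R := k)) = .id := by
  apply LinearMap.ext; intro x
  have h := Coalgebra.lTensor_counit_comul (R := k) x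
  simp only [pFst, LinearMap.comp_apply, LinearEquiv.coe_coe, h]
  simp

theorem pSnd_comp_comul : (pSnd (k := k) (C := D) (D := D)) ∘ₗ (comul (R := k)) = .id := by
  apply LinearMap.ext; intro x
  have h := Coalgebra.rTensor_counit_comul (R := k) x
  simp only [pSnd, LinearMap.comp_apply, LinearEquiv.coe_coe, h]
  simp

theorem isCoalgHom_pFst : IsCoalgHom (k := k) (pFst (C := C) (D := D)) := by
  constructor
  · ext c d
    simp [counit_tens, mul'_apply, mul_comm]
  · have key : (TensorProduct.map (pFst (k := k) (C := C) (D := D)) pFst) ∘ₗ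
        (TensorProduct.tensorTensorTensorComm k C C D D).toLinearMap
        = pFst (C := C ⊗[k] C) (D := D ⊗[k] D) := by
      ext c₁ c₂ d₁ d₂
      simp [counit_tens, mul'_apply, smul_tmul', mul_smul, tmul_smul]
      rw [smul_comm]
    rw [comul_tens, ← LinearMap.comp_assoc, key]
    ext c d
    simp [mul'_apply, counit_comul_eq, counit_tens]

theorem isCoalgHom_pSnd : IsCoalgHom (k := k) (pSnd (C := C) (D := D)) := by
  constructor
  · ext c d
    simp [counit_tens, mul'_apply]
  · have key : (TensorProduct.map (pSnd (k := k) (C := C) (D := D)) pSnd) ∘ₗ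
        (TensorProduct.tensorTensorTensorComm k C C D D).toLinearMap
        = pSnd (C := C ⊗[k] C) (D := D ⊗[k] D) := by
      ext c₁ c₂ d₁ d₂
      simp [counit_tens, mul'_apply, smul_tmul', mul_smul, tmul_smul]
      rw [smul_comm]
    rw [comul_tens, ← LinearMap.comp_assoc, key]
    ext c d
    simp [mul'_apply, counit_comul_eq, counit_tens]

theorem conv_pFst_pSnd (f : C →ₗ[k] A) (g : D →ₗ[k] A) :
    conv k (f ∘ₗ pFst) (g ∘ₗ pSnd) = (mul' k A) ∘ₗ TensorProduct.map f g := by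
  have key2 : (TensorProduct.map (pFst (k := k) (C := C) (D := D)) pSnd) ∘ₗ
      (TensorProduct.tensorTensorTensorComm k C C D D).toLinearMap
      = TensorProduct.map (pFst (C := C) (D := C)) (pSnd (C := D) (D := D)) := by
    ext c₁ c₂ d₁ d₂
    simp [smul_tmul', tmul_smul]
    rw [smul_comm]
  have idlem : (TensorProduct.map (pFst (k := k) (C := C) (D := D)) pSnd) ∘ₗ
      (comul (R := k) (A := C ⊗[k] D)) = .id := by
    rw [comul_tens, ← LinearMap.comp_assoc, key2, ← TensorProduct.map_comp,
      pFst_comp_comul, pSnd_comp_comul, TensorProduct.map_id]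
  rw [conv_def, TensorProduct.map_comp, LinearMap.comp_assoc, idlem]
  rfl

theorem conv_pSnd_pFst (f : D →ₗ[k] A) (g : C →ₗ[k] A) :
    conv k (f ∘ₗ pSnd) (g ∘ₗ pFst) =
      (mul' k A) ∘ₗ TensorProduct.map f g ∘ₗ (TensorProduct.comm k C D).toLinearMap := by
  have key3 : (TensorProduct.map (pSnd (k := k) (C := C) (D := D)) pFst) ∘ₗ
      (TensorProduct.tensorTensorTensorComm k C C D D).toLinearMap
      = (TensorProduct.map (pFst (C := D) (D := D)) (pSnd (C := C) (D := C))) ∘ₗ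
        (TensorProduct.comm k (C ⊗[k] C) (D ⊗[k] D)).toLinearMap := by
    ext c₁ c₂ d₁ d₂
    simp [smul_tmul', tmul_smul]
    rw [smul_comm]
  have commnat : (TensorProduct.comm k (C ⊗[k] C) (D ⊗[k] D)).toLinearMap ∘ₗ
      TensorProduct.map (comul (R := k) (A := C)) (comul (R := k) (A := D))
      = TensorProduct.map (comul (R := k)) (comul (R := k)) ∘ₗ
        (TensorProduct.comm k C D).toLinearMap := by
    ext c d; simp
  have idlem : (TensorProduct.map (pSnd (k := k) (C := C) (D := D)) pFst) ∘ₗ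
      (comul (R := k) (A := C ⊗[k] D)) = (TensorProduct.comm k C D).toLinearMap := by
    rw [comul_tens, ← LinearMap.comp_assoc, key3, LinearMap.comp_assoc, commnat,
      ← LinearMap.comp_assoc, ← TensorProduct.map_comp, pFst_comp_comul, pSnd_comp_comul,
      TensorProduct.map_id]
    exact LinearMap.id_comp _
  rw [conv_def, TensorProduct.map_comp, LinearMap.comp_assoc, idlem]

end Tens


section Hom
variable {C D E C' D' : Type}
  [AddCommGroup C] [Module k C] [Coalgebra k C]
  [AddCommGroup D] [Module k D] [Coalgebra k D]
  [AddCommGroup E] [Module k E] [Coalgebra k E]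
  [AddCommGroup C'] [Module k C'] [Coalgebra k C']
  [AddCommGroup D'] [Module k D'] [Coalgebra k D']

theorem IsCoalgHom.comp {φ : C →ₗ[k] D} {ψ : D →ₗ[k] E}
    (hψ : IsCoalgHom ψ) (hφ : IsCoalgHom φ) : IsCoalgHom (ψ ∘ₗ φ) := by
  constructor
  · rw [← LinearMap.comp_assoc, hψ.counit_comp, hφ.counit_comp]
  · rw [← LinearMap.comp_assoc, hψ.comul_comp, LinearMap.comp_assoc, hφ.comul_comp,
      ← LinearMap.comp_assoc, ← TensorProduct.map_comp]

theorem isCoalgHom_id : IsCoalgHom (k := k) (LinearMap.id (M := C)) :=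
  ⟨LinearMap.comp_id _, by rw [LinearMap.comp_id, TensorProduct.map_id, LinearMap.id_comp]⟩

theorem IsCoalgHom.tmap {φ : C →ₗ[k] D} {ψ : C' →ₗ[k] D'}
    (hφ : IsCoalgHom φ) (hψ : IsCoalgHom ψ) :
    IsCoalgHom (TensorProduct.map φ ψ) := by
  let F : C →ₗc[k] D :=
    { φ with counit_comp := hφ.counit_comp, map_comp_comul := hφ.comul_comp.symm }
  let G : C' →ₗc[k] D' :=
    { ψ with counit_comp := hψ.counit_comp, map_comp_comul := hψ.comul_comp.symm }
  exact ⟨(Coalgebra.TensorProduct.map F G).counit_comp,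
    ((Coalgebra.TensorProduct.map F G).map_comp_comul).symm⟩

theorem isCoalgHom_assoc_symm :
    IsCoalgHom (k := k) ((TensorProduct.assoc k C D E).symm.toLinearMap) := by
  let F := ((Coalgebra.TensorProduct.assoc k k C D E).symm : C ⊗[k] (D ⊗[k] E) →ₗc[k] (C ⊗[k] D) ⊗[k] E)
  exact ⟨F.counit_comp, (F.map_comp_comul).symm⟩

end Hom

section Bialg
variable {H A : Type} [Ring H] [Bialgebra k H] [Ring A] [Algebra k A]

theorem mulmul : (TensorProduct.map (mul' k H) (mul' k H)) ∘ₗ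
    (TensorProduct.tensorTensorTensorComm k H H H H).toLinearMap = mul' k (H ⊗[k] H) := by
  apply TensorProduct.ext
  apply TensorProduct.ext
  ext x y z w
  simp [mul'_apply, Algebra.TensorProduct.tmul_mul_tmul]

theorem isCoalgHom_mul' : IsCoalgHom (mul' k H) := by
  constructor
  · ext h g
    simp [counit_tens, mul'_apply]
  · ext h g
    have h2 := LinearMap.congr_fun (mulmul (k := k) (H := H))
      ((Coalgebra.comul (R := k) h) ⊗ₜ (Coalgebra.comul (R := k) g))
    simp only [TensorProduct.AlgebraTensorModule.curry_apply, TensorProduct.curry_apply,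
      LinearMap.coe_restrictScalars, LinearMap.comp_apply, LinearEquiv.coe_coe, mul'_apply,
      TensorProduct.map_tmul, Bialgebra.comul_mul] at h2 ⊢
    exact h2.symm

theorem conv_repr {C : Type} [AddCommGroup C] [Module k C] [Coalgebra k C]
    (f g : C →ₗ[k] A) {x : C} {ι : Type*} (r : Coalgebra.Repr k x ι) :
    conv k f g x = ∑ i ∈ r.index, f (r.left i) * g (r.right i) := by
  rw [conv_apply', ← r.eq]
  simp [mul'_apply]

theorem convOne_apply {C : Type} [AddCommGroup C] [Module k C] [Coalgebra k C] (x : C) :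
    convOne k C A x = algebraMap k A (Coalgebra.counit (R := k) x) := rfl

end Bialg


section Reprs
variable {C D A : Type}
  [AddCommGroup C] [Module k C] [Coalgebra k C]
  [AddCommGroup D] [Module k D] [Coalgebra k D]
  [Ring A] [Algebra k A]

open Coalgebra in
/-- A representation of `comul (c ⊗ₜ d)` from representations of `comul c`, `comul d`. -/
def reprTmul {c : C} {d : D} {ι κ : Type*} (rc : Coalgebra.Repr k c ι)
    (rd : Coalgebra.Repr k d κ) :
    Coalgebra.Repr k (c ⊗ₜ[k] d : C ⊗[k] D) (ι × κ) where
  index := rc.index ×ˢ rd.index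
  left := fun p => rc.left p.1 ⊗ₜ rd.left p.2
  right := fun p => rc.right p.1 ⊗ₜ rd.right p.2
  eq := by
    rw [comul_tens]
    simp only [LinearMap.comp_apply, LinearEquiv.coe_coe, TensorProduct.map_tmul]
    rw [← rc.eq, ← rd.eq]
    simp only [TensorProduct.sum_tmul, TensorProduct.tmul_sum, map_sum,
      TensorProduct.tensorTensorTensorComm_tmul, Finset.sum_product]
    rw [Finset.sum_comm]

theorem repr_sum_counit_right {x : C} {ι : Type*} (r : Coalgebra.Repr k x ι) :
    ∑ i ∈ r.index, (Coalgebra.counit (R := k) (r.right i)) • r.left i = x := by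
  calc ∑ i ∈ r.index, (Coalgebra.counit (R := k) (r.right i)) • r.left i
      = TensorProduct.rid k C
          (∑ i ∈ r.index, r.left i ⊗ₜ (Coalgebra.counit (R := k) (r.right i))) := by
        rw [map_sum]; simp
    _ = TensorProduct.rid k C (x ⊗ₜ 1) := by rw [Coalgebra.sum_tmul_counit_eq]
    _ = x := by simp

theorem repr_sum_counit_left {x : C} {ι : Type*} (r : Coalgebra.Repr k x ι) :
    ∑ i ∈ r.index, (Coalgebra.counit (R := k) (r.left i)) • r.right i = x := by
  calc ∑ i ∈ r.index, (Coalgebra.counit (R := k) (r.left i)) • r.right i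
      = TensorProduct.lid k C
          (∑ i ∈ r.index, (Coalgebra.counit (R := k) (r.left i)) ⊗ₜ r.right i) := by
        rw [map_sum]; simp
    _ = TensorProduct.lid k C ((1 : k) ⊗ₜ x) := by rw [Coalgebra.sum_counit_tmul_eq]
    _ = x := by simp

theorem conv_tmul {A : Type} [Ring A] [Algebra k A] (f g : C ⊗[k] D →ₗ[k] A) {c : C} {d : D}
    {ι κ : Type*} (rc : Coalgebra.Repr k c ι) (rd : Coalgebra.Repr k d κ) :
    conv k f g (c ⊗ₜ d) = ∑ i ∈ rc.index, ∑ j ∈ rd.index,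
      f (rc.left i ⊗ₜ rd.left j) * g (rc.right i ⊗ₜ rd.right j) := by
  rw [conv_repr f g (reprTmul rc rd)]
  exact Finset.sum_product (s := rc.index) (t := rd.index)
    (f := fun p => f (rc.left p.1 ⊗ₜ rd.left p.2) * g (rc.right p.1 ⊗ₜ rd.right p.2))

end Reprs

section Specific
variable {H A : Type} [Ring H] [Bialgebra k H] [Ring A] [Algebra k A]

theorem mul'_assoc' : (mul' k H) ∘ₗ lTensor H (mul' k H)
    = (mul' k H) ∘ₗ rTensor H (mul' k H) ∘ₗ (TensorProduct.assoc k H H H).symm.toLinearMap := by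
  ext h g l
  simp [mul'_apply, mul_assoc]

theorem pFst_lTensor_mul' :
    (pFst (k := k) (C := H) (D := H)) ∘ₗ lTensor H (mul' k H)
      = pFst (C := H) (D := H ⊗[k] H) := by
  ext h g l
  simp [counit_tens, mul'_apply]

theorem pSnd_lTensor_mul' :
    (pSnd (k := k) (C := H) (D := H)) ∘ₗ lTensor H (mul' k H)
      = (mul' k H) ∘ₗ pSnd (C := H) (D := H ⊗[k] H) := by
  ext h g l
  simp [counit_tens, mul'_apply]

theorem pFst_lTensor_pFst :
    (pFst (k := k) (C := H) (D := H)) ∘ₗ lTensor H (pFst (k := k) (C := H) (D := H))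
      = pFst (C := H) (D := H ⊗[k] H) := by
  ext h g l
  simp [counit_tens, mul'_apply, mul_smul]
  rw [smul_comm]

theorem pSnd_lTensor_pFst :
    (pSnd (k := k) (C := H) (D := H)) ∘ₗ lTensor H (pFst (k := k) (C := H) (D := H))
      = (pFst (k := k) (C := H) (D := H)) ∘ₗ pSnd (C := H) (D := H ⊗[k] H) := by
  ext h g l
  simp
  rw [smul_comm]

theorem pFst_theta :
    (pFst (k := k) (C := H) (D := H)) ∘ₗ (rTensor H (mul' k H)) ∘ₗ
        (TensorProduct.assoc k H H H).symm.toLinearMap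
      = (mul' k H) ∘ₗ lTensor H (pFst (k := k) (C := H) (D := H)) := by
  ext h g l
  simp [mul'_apply, mul_smul_comm]

theorem pSnd_theta :
    (pSnd (k := k) (C := H) (D := H)) ∘ₗ (rTensor H (mul' k H)) ∘ₗ
        (TensorProduct.assoc k H H H).symm.toLinearMap
      = (pSnd (k := k) (C := H) (D := H)) ∘ₗ pSnd (C := H) (D := H ⊗[k] H) := by
  ext h g l
  simp [counit_tens, mul'_apply, mul_smul]

theorem sig_def (γ μ : H →ₗ[k] A) : sigMap k A H γ μ
    = conv k ((mul' k A) ∘ₗ TensorProduct.map γ γ) (μ ∘ₗ mul' k H) := rfl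

theorem sig_eq (γ μ : H →ₗ[k] A) : sigMap k A H γ μ
    = conv k (conv k (γ ∘ₗ pFst) (γ ∘ₗ pSnd)) (μ ∘ₗ mul' k H) := by
  rw [sig_def, conv_pFst_pSnd]

theorem omg_eq (γ μ : H →ₗ[k] A) : omgMap k A H γ μ
    = conv k (γ ∘ₗ mul' k H) (conv k (μ ∘ₗ pSnd) (μ ∘ₗ pFst)) := by
  rw [show omgMap k A H γ μ = conv k (γ ∘ₗ mul' k H) ((mul' k A) ∘ₗ
    TensorProduct.map μ μ ∘ₗ (TensorProduct.comm k H H).toLinearMap) from rfl,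
    conv_pSnd_pFst]

theorem sig_comp (γ μ : H →ₗ[k] A) {E : Type} [AddCommGroup E] [Module k E] [Coalgebra k E]
    {φ : E →ₗ[k] H ⊗[k] H} (hφ : IsCoalgHom φ) :
    (sigMap k A H γ μ) ∘ₗ φ
      = conv k (conv k (γ ∘ₗ (pFst ∘ₗ φ)) (γ ∘ₗ (pSnd ∘ₗ φ))) (μ ∘ₗ (mul' k H ∘ₗ φ)) := by
  rw [sig_eq, ← conv_comp hφ, ← conv_comp hφ]
  simp only [LinearMap.comp_assoc]

theorem actL_apply (γ μ : H →ₗ[k] A) (a : A) {h : H} {ι : Type*} (rh : Coalgebra.Repr k h ι) :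
    actL k A H γ μ (h ⊗ₜ a) = ∑ i ∈ rh.index, γ (rh.left i) * (a * μ (rh.right i)) := by
  simp only [actL, LinearMap.comp_apply, LinearMap.rTensor_tmul]
  rw [← rh.eq]
  simp [TensorProduct.sum_tmul, mul'_apply]

theorem actL_sandwich (γ μ : H →ₗ[k] A) {D : Type} [AddCommGroup D] [Module k D]
    [Coalgebra k D] (τ : D →ₗ[k] A) :
    conv k (conv k (γ ∘ₗ pFst) (τ ∘ₗ pSnd)) (μ ∘ₗ pFst)
      = (actL k A H γ μ) ∘ₗ lTensor H τ := by
  rw [conv_pFst_pSnd]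
  apply TensorProduct.ext'
  intro h x
  have rh := Coalgebra.Repr.arbitrary k h
  have rx := Coalgebra.Repr.arbitrary k x
  rw [LinearMap.comp_apply, LinearMap.lTensor_tmul, actL_apply γ μ (τ x) rh,
    conv_tmul _ _ rh rx]
  refine Finset.sum_congr rfl fun i _ => ?_
  have key := repr_sum_counit_right (k := k) rx
  calc ∑ j ∈ rx.index,
        ((mul' k A) ∘ₗ TensorProduct.map γ τ) (rh.left i ⊗ₜ rx.left j) *
          ((μ ∘ₗ pFst) (rh.right i ⊗ₜ rx.right j))
      = ∑ j ∈ rx.index, (Coalgebra.counit (R := k) (rx.right j)) •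
          (γ (rh.left i) * (τ (rx.left j) * μ (rh.right i))) := by
        refine Finset.sum_congr rfl fun j _ => ?_
        simp [mul'_apply, mul_smul_comm, smul_mul_assoc, mul_assoc]
    _ = γ (rh.left i) * (τ x * μ (rh.right i)) := by
        have h2 : (∑ j ∈ rx.index, (Coalgebra.counit (R := k) (rx.right j)) • τ (rx.left j))
            = τ x := by
          conv_rhs => rw [← key]
          simp
        rw [← h2]
        simp [Finset.mul_sum, Finset.sum_mul, smul_mul_assoc, mul_smul_comm]
/-- Representation of `comul 1`. -/
def reprOne : Coalgebra.Repr k (1 : H) ℕ where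
  index := ({0} : Finset ℕ)
  left := fun _ => (1 : H)
  right := fun _ => (1 : H)
  eq := by simp [Algebra.TensorProduct.one_def]

theorem sig_norm_right (γ μ : H →ₗ[k] A) (hγμ : conv k γ μ = convOne k H A)
    (hγone : γ 1 = 1) (h : H) :
    sigMap k A H γ μ (h ⊗ₜ (1 : H)) = (Coalgebra.counit (R := k) h) • (1 : A) := by
  have rh := Coalgebra.Repr.arbitrary k h
  rw [sig_def, conv_tmul _ _ rh (reprOne (k := k) (H := H))]
  have hc := LinearMap.congr_fun hγμ h
  rw [conv_repr γ μ rh, convOne_apply] at hc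
  calc ∑ i ∈ rh.index, ∑ j ∈ (reprOne (k := k) (H := H)).index,
        ((mul' k A) ∘ₗ TensorProduct.map γ γ) (rh.left i ⊗ₜ (1 : H)) *
          ((μ ∘ₗ mul' k H) (rh.right i ⊗ₜ (1 : H)))
      = ∑ i ∈ rh.index, γ (rh.left i) * μ (rh.right i) := by
        refine Finset.sum_congr rfl fun i _ => ?_
        simp [reprOne, mul'_apply, hγone]
    _ = (Coalgebra.counit (R := k) h) • (1 : A) := by
        rw [hc, Algebra.algebraMap_eq_smul_one]

theorem sig_norm_left (γ μ : H →ₗ[k] A) (hγμ : conv k γ μ = convOne k H A)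
    (hγone : γ 1 = 1) (h : H) :
    sigMap k A H γ μ ((1 : H) ⊗ₜ h) = (Coalgebra.counit (R := k) h) • (1 : A) := by
  have rh := Coalgebra.Repr.arbitrary k h
  rw [sig_def, conv_tmul _ _ (reprOne (k := k) (H := H)) rh]
  have hc := LinearMap.congr_fun hγμ h
  rw [conv_repr γ μ rh, convOne_apply] at hc
  calc ∑ j ∈ (reprOne (k := k) (H := H)).index, ∑ i ∈ rh.index,
        ((mul' k A) ∘ₗ TensorProduct.map γ γ) ((1 : H) ⊗ₜ rh.left i) *
          ((μ ∘ₗ mul' k H) ((1 : H) ⊗ₜ rh.right i))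
      = ∑ i ∈ rh.index, γ (rh.left i) * μ (rh.right i) := by
        rw [show (reprOne (k := k) (H := H)).index = ({0} : Finset ℕ) from rfl,
          Finset.sum_singleton]
        refine Finset.sum_congr rfl fun i _ => ?_
        simp [mul'_apply, hγone]
    _ = (Coalgebra.counit (R := k) h) • (1 : A) := by
        rw [hc, Algebra.algebraMap_eq_smul_one]

theorem conv_cancel_comp (γ μ : H →ₗ[k] A) (hγμ : conv k γ μ = convOne k H A)
    {E : Type} [AddCommGroup E] [Module k E] [Coalgebra k E]
    {φ : E →ₗ[k] H} (hφ : IsCoalgHom φ) :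
    conv k (γ ∘ₗ φ) (μ ∘ₗ φ) = convOne k E A := by
  rw [conv_comp hφ, hγμ, one_comp hφ]

end Specific

end Kit

end CrossedGalois

namespace CrossedGalois

/-- `σ'(h,g) = Σ γ(h₁)γ(g₁)γ⁻¹(h₂g₂)` lands in `B`, is convolution
invertible with inverse `ω'(h,g) = Σ γ(h₁g₁)γ⁻¹(g₂)γ⁻¹(h₂)`, and is a normalized
2-cocycle for the induced weak action. -/
theorem induced_cocycle (k A H : Type) [Field k] [Ring A] [Algebra k A] [Ring H] [HopfAlgebra k H]
    (ρ : A →ₗ[k] A ⊗[k] H) (hA : IsComodAlg k H ρ)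
    (S : Subalgebra k A) (hS : ∀ a : A, a ∈ S ↔ ρ a = a ⊗ₜ (1 : H))
    (γ μ : H →ₗ[k] A)
    (hγcolin : ∀ h : H, ρ (γ h) = (rTensor H γ) (Coalgebra.comul (R := k) h))
    (hγone : γ (1 : H) = 1)
    (hconv : conv k γ μ = convOne k H A ∧ conv k μ γ = convOne k H A) :
    (∀ h g : H, sigMap k A H γ μ (h ⊗ₜ g) ∈ S) ∧
    conv k (sigMap k A H γ μ) (omgMap k A H γ μ) = convOne k (H ⊗[k] H) A ∧
    conv k (omgMap k A H γ μ) (sigMap k A H γ μ) = convOne k (H ⊗[k] H) A ∧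
    IsCocycle k A H (actL k A H γ μ) (sigMap k A H γ μ) := by
  obtain ⟨hγμ, hμγ⟩ := hconv
  set R : A →ₗ[k] A ⊗[k] H := (TensorProduct.mk k A H).flip 1 with hRdef
  set e : H →ₗ[k] A ⊗[k] H := TensorProduct.mk k A H 1 with hedef
  have hRmul : ∀ x y : A, R (x * y) = R x * R y := fun x y => by
    simp [hRdef, Algebra.TensorProduct.tmul_mul_tmul]
  have hR1 : R (1 : A) = 1 := by
    simp [hRdef, Algebra.TensorProduct.one_def]
  have hemul : ∀ x y : H, e (x * y) = e x * e y := fun x y => by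
    simp [hedef, Algebra.TensorProduct.tmul_mul_tmul]
  have he1 : e (1 : H) = 1 := by
    simp [hedef, Algebra.TensorProduct.one_def]
  have hSl : conv k (LinearMap.id (M := H)) (HopfAlgebra.antipode (R := k)) = convOne k H H :=
    HopfAlgebra.mul_antipode_lTensor_comul
  have hSr : conv k (HopfAlgebra.antipode (R := k) (A := H)) LinearMap.id = convOne k H H :=
    HopfAlgebra.mul_antipode_rTensor_comul
  have heS : conv k e (e ∘ₗ HopfAlgebra.antipode (R := k)) = convOne k H (A ⊗[k] H) := by
    have h1 := Kit.comp_conv (k := k) (Φ := e) hemul LinearMap.id (HopfAlgebra.antipode (R := k))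
    rw [hSl, LinearMap.comp_id, Kit.comp_one he1] at h1
    exact h1.symm
  have hSe : conv k (e ∘ₗ HopfAlgebra.antipode (R := k)) e = convOne k H (A ⊗[k] H) := by
    have h1 := Kit.comp_conv (k := k) (Φ := e) hemul (HopfAlgebra.antipode (R := k)) LinearMap.id
    rw [hSr, LinearMap.comp_id, Kit.comp_one he1] at h1
    exact h1.symm
  have hG : ρ ∘ₗ γ = conv k (R ∘ₗ γ) e := by
    apply LinearMap.ext; intro h
    have rh := Coalgebra.Repr.arbitrary k h
    rw [LinearMap.comp_apply, hγcolin h, Kit.conv_repr _ _ rh, ← rh.eq]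
    simp [hRdef, hedef, Algebra.TensorProduct.tmul_mul_tmul]
  have hρ1 : conv k (ρ ∘ₗ γ) (ρ ∘ₗ μ) = convOne k H (A ⊗[k] H) := by
    rw [← Kit.comp_conv (k := k) hA.mul, hγμ, Kit.comp_one hA.one]
  have hRμγ : conv k (R ∘ₗ μ) (R ∘ₗ γ) = convOne k H (A ⊗[k] H) := by
    rw [← Kit.comp_conv (k := k) hRmul, hμγ, Kit.comp_one hR1]
  have hQG : conv k (conv k (e ∘ₗ HopfAlgebra.antipode (R := k)) (R ∘ₗ μ)) (ρ ∘ₗ γ)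
      = convOne k H (A ⊗[k] H) := by
    rw [hG, Kit.conv_conv_cancel hRμγ, hSe]
  have hQ : ρ ∘ₗ μ = conv k (e ∘ₗ HopfAlgebra.antipode (R := k)) (R ∘ₗ μ) := by
    calc ρ ∘ₗ μ = conv k (convOne k H (A ⊗[k] H)) (ρ ∘ₗ μ) := (Kit.one_conv _).symm
      _ = conv k (conv k (conv k (e ∘ₗ HopfAlgebra.antipode (R := k)) (R ∘ₗ μ)) (ρ ∘ₗ γ))
            (ρ ∘ₗ μ) := by rw [hQG]
      _ = conv k (conv k (e ∘ₗ HopfAlgebra.antipode (R := k)) (R ∘ₗ μ))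
            (conv k (ρ ∘ₗ γ) (ρ ∘ₗ μ)) := by rw [Kit.conv_assoc]
      _ = _ := by rw [hρ1, Kit.conv_one]
  have swap : conv k (e ∘ₗ (Kit.pFst (k := k) (C := H) (D := H)))
        ((R ∘ₗ γ) ∘ₗ (Kit.pSnd (k := k) (C := H) (D := H)))
      = conv k ((R ∘ₗ γ) ∘ₗ (Kit.pSnd (k := k) (C := H) (D := H)))
        (e ∘ₗ (Kit.pFst (k := k) (C := H) (D := H))) := by
    rw [Kit.conv_pFst_pSnd, Kit.conv_pSnd_pFst]
    apply TensorProduct.ext'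
    intro x y
    simp [hRdef, hedef, Algebra.TensorProduct.tmul_mul_tmul]
  have hee : conv k (e ∘ₗ (Kit.pFst (k := k) (C := H) (D := H)))
        (e ∘ₗ (Kit.pSnd (k := k) (C := H) (D := H)))
      = e ∘ₗ mul' k H := by
    rw [Kit.conv_pFst_pSnd]
    apply TensorProduct.ext'
    intro x y
    simp [hedef, Algebra.TensorProduct.tmul_mul_tmul, mul'_apply]
  have heSm : conv k (e ∘ₗ mul' k H)
      ((e ∘ₗ HopfAlgebra.antipode (R := k)) ∘ₗ mul' k H) = convOne k (H ⊗[k] H) (A ⊗[k] H) := by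
    rw [Kit.conv_comp Kit.isCoalgHom_mul', heS, Kit.one_comp Kit.isCoalgHom_mul']
  have hρσ : ρ ∘ₗ sigMap k A H γ μ = R ∘ₗ sigMap k A H γ μ := by
    rw [Kit.sig_eq γ μ, Kit.comp_conv (k := k) hA.mul, Kit.comp_conv (k := k) hA.mul,
      Kit.comp_conv (k := k) hRmul, Kit.comp_conv (k := k) hRmul]
    simp only [← LinearMap.comp_assoc]
    rw [hG, hQ, ← Kit.conv_comp (Kit.isCoalgHom_pFst), ← Kit.conv_comp (Kit.isCoalgHom_pSnd),
      ← Kit.conv_comp (Kit.isCoalgHom_mul'), Kit.conv_exchange swap, hee,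
      Kit.conv_conv_cancel heSm]
  have hmem : ∀ h g : H, sigMap k A H γ μ (h ⊗ₜ g) ∈ S := by
    intro h g
    rw [hS]
    have h2 := LinearMap.congr_fun hρσ (h ⊗ₜ g)
    simpa [hRdef] using h2
  refine ⟨hmem, ?_, ?_, ?_⟩
  · rw [Kit.sig_eq, Kit.omg_eq,
      Kit.conv_conv_cancel (Kit.conv_cancel_comp μ γ hμγ Kit.isCoalgHom_mul'),
      Kit.conv_conv_cancel (Kit.conv_cancel_comp γ μ hγμ Kit.isCoalgHom_pSnd)]
    exact Kit.conv_cancel_comp γ μ hγμ Kit.isCoalgHom_pFst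
  · have hWF : conv k (conv k (μ ∘ₗ (Kit.pSnd (k := k) (C := H) (D := H)))
          (μ ∘ₗ (Kit.pFst (k := k) (C := H) (D := H))))
        (conv k (γ ∘ₗ (Kit.pFst (k := k) (C := H) (D := H)))
          (γ ∘ₗ (Kit.pSnd (k := k) (C := H) (D := H)))) = convOne k (H ⊗[k] H) A := by
      rw [Kit.conv_conv_cancel (Kit.conv_cancel_comp μ γ hμγ Kit.isCoalgHom_pFst)]
      exact Kit.conv_cancel_comp μ γ hμγ Kit.isCoalgHom_pSnd
    rw [Kit.sig_eq, Kit.omg_eq, Kit.conv_conv_cancel hWF]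
    exact Kit.conv_cancel_comp γ μ hγμ Kit.isCoalgHom_mul'
  · have hψ : Kit.IsCoalgHom (k := k) (lTensor H (mul' k H)) :=
      Kit.IsCoalgHom.tmap Kit.isCoalgHom_id Kit.isCoalgHom_mul'
    have hχ : Kit.IsCoalgHom (k := k) (lTensor H (Kit.pFst (k := k) (C := H) (D := H))) :=
      Kit.IsCoalgHom.tmap Kit.isCoalgHom_id Kit.isCoalgHom_pFst
    have hθ : Kit.IsCoalgHom (k := k) ((rTensor H (mul' k H)) ∘ₗ
        (TensorProduct.assoc k H H H).symm.toLinearMap) :=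
      (Kit.IsCoalgHom.tmap Kit.isCoalgHom_mul' Kit.isCoalgHom_id).comp Kit.isCoalgHom_assoc_symm
    refine ⟨?_, Kit.sig_norm_right γ μ hγμ hγone, Kit.sig_norm_left γ μ hγμ hγone⟩
    rw [← Kit.actL_sandwich γ μ (sigMap k A H γ μ),
      Kit.sig_comp γ μ (Kit.isCoalgHom_pSnd (C := H) (D := H ⊗[k] H)),
      Kit.sig_comp γ μ hψ,
      show (TensorProduct.rid k H).toLinearMap ∘ₗ lTensor H (Coalgebra.counit (R := k))
        = (Kit.pFst (k := k) (C := H) (D := H)) from rfl,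
      Kit.sig_comp γ μ hχ, Kit.sig_comp γ μ hθ,
      Kit.pFst_lTensor_mul', Kit.pSnd_lTensor_mul', Kit.pFst_lTensor_pFst,
      Kit.pSnd_lTensor_pFst, Kit.pFst_theta, Kit.pSnd_theta, ← Kit.mul'_assoc']
    exact Kit.cocycle_words _ _ _ _ _ _ _ _ _
      (Kit.conv_cancel_comp μ γ hμγ Kit.isCoalgHom_pFst)
      (Kit.conv_cancel_comp μ γ hμγ (Kit.isCoalgHom_mul'.comp Kit.isCoalgHom_pSnd))
      (Kit.conv_cancel_comp μ γ hμγ (Kit.isCoalgHom_mul'.comp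
        (Kit.IsCoalgHom.tmap Kit.isCoalgHom_id Kit.isCoalgHom_pFst)))

end CrossedGalois
end
end

section
/- Suppose A is a right H-comodule algebra with B = A^{co H} and γ : H → A is a convolution-invertible H-comodule map with γ(1)=1. With weak action h·b = Σ γ(h₍₁₎) b γ⁻¹(h₍₂₎) and cocycle σ(h,g) = Σ γ(h₍₁₎) γ(g₍₁₎) γ⁻¹(h₍₂₎ g₍₂₎), B is a twisted H-module: Σ (h₍₁₎ · (g₍₁₎ · b)) σ(h₍₂₎, g₍₂₎) = Σ σ(h₍₁₎, g₍₁₎) ((h₍₂₎ g₍₂₎) · b) for all h, g ∈ H and b ∈ B. -/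
open TensorProduct LinearMap

noncomputable section

namespace CrossedGalois

section ConvLemmas
variable {k : Type} [Field k] {C B : Type} [AddCommGroup C] [Module k C] [Coalgebra k C]
  [Ring B] [Algebra k B]

lemma conv_apply_repr (f g : C →ₗ[k] B) {a : C} {ι : Type*} (r : Coalgebra.Repr k a ι) :
    conv k f g a = ∑ i ∈ r.index, f (r.left i) * g (r.right i) := by
  simp only [conv, LinearMap.comp_apply, ← r.eq, map_sum, TensorProduct.map_tmul,
    LinearMap.mul'_apply]

lemma convOne_apply (x : C) :
    convOne k C B x = algebraMap k B (Coalgebra.counit (R := k) x) := rfl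

lemma conv_one (f : C →ₗ[k] B) : conv k f (convOne k C B) = f := by
  ext a
  have key := congrArg (LinearMap.mul' k B ∘ₗ TensorProduct.map f (Algebra.linearMap k B))
    (Coalgebra.sum_tmul_counit_eq (Coalgebra.Repr.arbitrary k a))
  simp only [map_sum, LinearMap.comp_apply, TensorProduct.map_tmul, LinearMap.mul'_apply,
    Algebra.linearMap_apply, map_one, mul_one] at key
  rw [conv_apply_repr f _ (Coalgebra.Repr.arbitrary k a)]
  simpa only [convOne_apply] using key

lemma one_conv (f : C →ₗ[k] B) : conv k (convOne k C B) f = f := by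
  ext a
  have key := congrArg (LinearMap.mul' k B ∘ₗ TensorProduct.map (Algebra.linearMap k B) f)
    (Coalgebra.sum_counit_tmul_eq (Coalgebra.Repr.arbitrary k a))
  simp only [map_sum, LinearMap.comp_apply, TensorProduct.map_tmul, LinearMap.mul'_apply,
    Algebra.linearMap_apply, map_one, one_mul] at key
  rw [conv_apply_repr _ f (Coalgebra.Repr.arbitrary k a)]
  simpa only [convOne_apply] using key

lemma conv_assoc (f g h : C →ₗ[k] B) : conv k (conv k f g) h = conv k f (conv k g h) := by
  ext a
  have key := Coalgebra.sum_tmul_tmul_eq (R := k) (Coalgebra.Repr.arbitrary k a)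
      (fun i => Coalgebra.Repr.arbitrary k _) (fun i => Coalgebra.Repr.arbitrary k _)
  have key2 := congrArg (LinearMap.mul' k B ∘ₗ
    TensorProduct.map f (LinearMap.mul' k B ∘ₗ TensorProduct.map g h)) key
  simp only [map_sum, LinearMap.comp_apply, TensorProduct.map_tmul, LinearMap.mul'_apply] at key2
  rw [conv_apply_repr _ h (Coalgebra.Repr.arbitrary k a),
      conv_apply_repr f _ (Coalgebra.Repr.arbitrary k a)]
  calc ∑ i ∈ (Coalgebra.Repr.arbitrary k a).index,
        conv k f g ((Coalgebra.Repr.arbitrary k a).left i) * h ((Coalgebra.Repr.arbitrary k a).right i)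
      = ∑ i ∈ (Coalgebra.Repr.arbitrary k a).index,
          ∑ j ∈ (Coalgebra.Repr.arbitrary k ((Coalgebra.Repr.arbitrary k a).left i)).index,
          f ((Coalgebra.Repr.arbitrary k ((Coalgebra.Repr.arbitrary k a).left i)).left j) *
          g ((Coalgebra.Repr.arbitrary k ((Coalgebra.Repr.arbitrary k a).left i)).right j) *
          h ((Coalgebra.Repr.arbitrary k a).right i) := by
        refine Finset.sum_congr rfl fun i _ => ?_
        rw [conv_apply_repr f g (Coalgebra.Repr.arbitrary k _), Finset.sum_mul]
    _ = ∑ i ∈ (Coalgebra.Repr.arbitrary k a).index,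
          f ((Coalgebra.Repr.arbitrary k a).left i) *
          conv k g h ((Coalgebra.Repr.arbitrary k a).right i) := by
        simp only [mul_assoc]
        rw [key2]
        refine Finset.sum_congr rfl fun i _ => ?_
        rw [conv_apply_repr g h (Coalgebra.Repr.arbitrary k _), Finset.mul_sum]

lemma mulLeft_conv (b : B) (f g : C →ₗ[k] B) :
    conv k (LinearMap.mulLeft k b ∘ₗ f) g = LinearMap.mulLeft k b ∘ₗ conv k f g := by
  ext a
  rw [LinearMap.comp_apply, conv_apply_repr _ g (Coalgebra.Repr.arbitrary k a),
    conv_apply_repr f g (Coalgebra.Repr.arbitrary k a)]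
  simp only [LinearMap.comp_apply, LinearMap.mulLeft_apply, Finset.mul_sum, mul_assoc]

end ConvLemmas

section ReprLemmas
variable {k : Type} [Field k] {H : Type} [Ring H] [Bialgebra k H]

/-- Representation of `comul (h ⊗ₜ g)` from representations of `comul h` and `comul g`. -/
def tensorRepr {h g : H} {ι κ : Type*} (rh : Coalgebra.Repr k h ι) (rg : Coalgebra.Repr k g κ) :
    Coalgebra.Repr k (h ⊗ₜ[k] g) (ι × κ) where
  index := rh.index ×ˢ rg.index
  left := fun p => rh.left p.1 ⊗ₜ[k] rg.left p.2
  right := fun p => rh.right p.1 ⊗ₜ[k] rg.right p.2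
  eq := by
    have : Coalgebra.comul (R := k) (h ⊗ₜ[k] g) =
        TensorProduct.tensorTensorTensorComm k H H H H
          ((Coalgebra.comul (R := k) h) ⊗ₜ (Coalgebra.comul (R := k) g)) := rfl
    rw [this, ← rh.eq, ← rg.eq]
    simp only [TensorProduct.sum_tmul, TensorProduct.tmul_sum, map_sum,
      TensorProduct.tensorTensorTensorComm_tmul, Finset.sum_product]
    rw [Finset.sum_comm]

/-- Representation of `comul (h * g)`. -/
def mulRepr {h g : H} {ι κ : Type*} (rh : Coalgebra.Repr k h ι) (rg : Coalgebra.Repr k g κ) :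
    Coalgebra.Repr k (h * g) (ι × κ) where
  index := rh.index ×ˢ rg.index
  left := fun p => rh.left p.1 * rg.left p.2
  right := fun p => rh.right p.1 * rg.right p.2
  eq := by
    rw [Bialgebra.comul_mul, ← rh.eq, ← rg.eq, Finset.sum_mul_sum]
    simp only [Algebra.TensorProduct.tmul_mul_tmul, Finset.sum_product]

lemma counit_tmul (h g : H) :
    Coalgebra.counit (R := k) (h ⊗ₜ[k] g) =
      Coalgebra.counit (R := k) h * Coalgebra.counit (R := k) g := by
  rw [_root_.TensorProduct.counit_tmul, smul_eq_mul, mul_comm]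

end ReprLemmas

section ActLemmas
variable {k : Type} [Field k] {A H : Type} [Ring A] [Algebra k A] [Ring H] [Bialgebra k H]

lemma actL_apply (γ μ : H →ₗ[k] A) (a : A) {h : H} {ι : Type*} (rh : Coalgebra.Repr k h ι) :
    actL k A H γ μ (h ⊗ₜ[k] a) = ∑ i ∈ rh.index, γ (rh.left i) * (a * μ (rh.right i)) := by
  simp only [actL, LinearMap.comp_apply, LinearMap.rTensor_tmul, ← rh.eq,
    TensorProduct.sum_tmul, map_sum, LinearEquiv.coe_coe, TensorProduct.assoc_tmul,
    LinearMap.lTensor_tmul, TensorProduct.comm_tmul, TensorProduct.map_tmul,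
    LinearMap.mul'_apply]

end ActLemmas

/-- with the induced weak action and cocycle, `B` is a twisted
`H`-module: `Σ (h₁ · (g₁ · b)) σ(h₂,g₂) = Σ σ(h₁,g₁) ((h₂g₂) · b)`. -/
theorem induced_twisted_module (k A H : Type) [Field k] [Ring A] [Algebra k A] [Ring H] [HopfAlgebra k H]
    (ρ : A →ₗ[k] A ⊗[k] H) (hA : IsComodAlg k H ρ)
    (S : Subalgebra k A) (hS : ∀ a : A, a ∈ S ↔ ρ a = a ⊗ₜ (1 : H))
    (γ μ : H →ₗ[k] A)
    (hγcolin : ∀ h : H, ρ (γ h) = (rTensor H γ) (Coalgebra.comul (R := k) h))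
    (hγone : γ (1 : H) = 1)
    (hconv : conv k γ μ = convOne k H A ∧ conv k μ γ = convOne k H A) :
    ∀ b : A, b ∈ S →
      conv k ((actL k A H γ μ) ∘ₗ lTensor H (actOn k A H (actL k A H γ μ) b))
          (sigMap k A H γ μ) =
        conv k (sigMap k A H γ μ)
          ((actOn k A H (actL k A H γ μ) b) ∘ₗ LinearMap.mul' k H) := by
  intro b _
  -- pointwise form of the convolution inverse hypothesis
  have hμγ : ∀ (x : H) {ι : Type} (r : Coalgebra.Repr k x ι),
      ∑ i ∈ r.index, μ (r.left i) * γ (r.right i) =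
        algebraMap k A (Coalgebra.counit (R := k) x) := by
    intro x _ r
    rw [← conv_apply_repr μ γ r, hconv.2, convOne_apply]
  -- the four maps
  set Γ : H ⊗[k] H →ₗ[k] A := (LinearMap.mul' k A) ∘ₗ TensorProduct.map γ γ with hΓdef
  set M : H ⊗[k] H →ₗ[k] A :=
    ((LinearMap.mul' k A) ∘ₗ (TensorProduct.map μ μ) ∘ₗ
      (TensorProduct.comm k H H).toLinearMap) with hMdef
  set Γ' : H ⊗[k] H →ₗ[k] A := γ ∘ₗ LinearMap.mul' k H with hΓ'def
  set M' : H ⊗[k] H →ₗ[k] A := μ ∘ₗ LinearMap.mul' k H with hM'def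
  set β : A →ₗ[k] A := LinearMap.mulLeft k b with hβdef
  -- F1 : M is a left convolution inverse of Γ
  have hMΓ : conv k M Γ = convOne k (H ⊗[k] H) A := by
    refine TensorProduct.ext' fun h g => ?_
    rw [conv_apply_repr M Γ
        (tensorRepr (Coalgebra.Repr.arbitrary k h) (Coalgebra.Repr.arbitrary k g)),
      convOne_apply, counit_tmul]
    simp only [tensorRepr, Finset.sum_product, hMdef, hΓdef, LinearMap.comp_apply,
      LinearEquiv.coe_coe, TensorProduct.comm_tmul, TensorProduct.map_tmul,
      LinearMap.mul'_apply]
    rw [Finset.sum_comm]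
    have step : ∀ j ∈ (Coalgebra.Repr.arbitrary k g).index,
        ∑ i ∈ (Coalgebra.Repr.arbitrary k h).index,
          μ ((Coalgebra.Repr.arbitrary k g).left j) * μ ((Coalgebra.Repr.arbitrary k h).left i) *
            (γ ((Coalgebra.Repr.arbitrary k h).right i) * γ ((Coalgebra.Repr.arbitrary k g).right j)) =
        (Coalgebra.counit (R := k) h) •
          (μ ((Coalgebra.Repr.arbitrary k g).left j) * γ ((Coalgebra.Repr.arbitrary k g).right j)) := by
      intro j _
      have : ∑ i ∈ (Coalgebra.Repr.arbitrary k h).index,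
          μ ((Coalgebra.Repr.arbitrary k g).left j) * μ ((Coalgebra.Repr.arbitrary k h).left i) *
            (γ ((Coalgebra.Repr.arbitrary k h).right i) * γ ((Coalgebra.Repr.arbitrary k g).right j)) =
          μ ((Coalgebra.Repr.arbitrary k g).left j) *
            ((∑ i ∈ (Coalgebra.Repr.arbitrary k h).index,
              μ ((Coalgebra.Repr.arbitrary k h).left i) * γ ((Coalgebra.Repr.arbitrary k h).right i)) *
              γ ((Coalgebra.Repr.arbitrary k g).right j)) := by
        rw [Finset.sum_mul, Finset.mul_sum]
        exact Finset.sum_congr rfl fun i _ => by simp only [mul_assoc]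
      rw [this, hμγ h (Coalgebra.Repr.arbitrary k h), ← Algebra.smul_def, mul_smul_comm]
    rw [Finset.sum_congr rfl step, ← Finset.smul_sum,
      hμγ g (Coalgebra.Repr.arbitrary k g), Algebra.smul_def, ← map_mul]
  -- F2 : M' is a left convolution inverse of Γ'
  have hM'Γ' : conv k M' Γ' = convOne k (H ⊗[k] H) A := by
    refine TensorProduct.ext' fun h g => ?_
    rw [conv_apply_repr M' Γ'
        (tensorRepr (Coalgebra.Repr.arbitrary k h) (Coalgebra.Repr.arbitrary k g)),
      convOne_apply, counit_tmul, ← Bialgebra.counit_mul,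
      ← hμγ (h * g) (mulRepr (Coalgebra.Repr.arbitrary k h) (Coalgebra.Repr.arbitrary k g))]
    simp only [tensorRepr, mulRepr, hM'def, hΓ'def, LinearMap.comp_apply,
      LinearMap.mul'_apply]
  -- F6' : the iterated action
  have hL : (actL k A H γ μ) ∘ₗ lTensor H (actOn k A H (actL k A H γ μ) b) =
      conv k Γ (β ∘ₗ M) := by
    refine TensorProduct.ext' fun h g => ?_
    rw [LinearMap.comp_apply, LinearMap.lTensor_tmul]
    have hb : actOn k A H (actL k A H γ μ) b g = actL k A H γ μ (g ⊗ₜ[k] b) := rfl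
    rw [hb, actL_apply γ μ _ (Coalgebra.Repr.arbitrary k h),
      actL_apply γ μ b (Coalgebra.Repr.arbitrary k g),
      conv_apply_repr Γ (β ∘ₗ M)
        (tensorRepr (Coalgebra.Repr.arbitrary k h) (Coalgebra.Repr.arbitrary k g))]
    simp only [tensorRepr, Finset.sum_product, hΓdef, hMdef, hβdef, LinearMap.comp_apply,
      LinearEquiv.coe_coe, TensorProduct.comm_tmul, TensorProduct.map_tmul,
      LinearMap.mul'_apply, LinearMap.mulLeft_apply, Finset.sum_mul, Finset.mul_sum]
    exact Finset.sum_congr rfl fun i _ => Finset.sum_congr rfl fun j _ => by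
      simp only [mul_assoc]
  -- F8 : the action through the product
  have hR : (actOn k A H (actL k A H γ μ) b) ∘ₗ LinearMap.mul' k H =
      conv k Γ' (β ∘ₗ M') := by
    refine TensorProduct.ext' fun h g => ?_
    rw [LinearMap.comp_apply, LinearMap.mul'_apply]
    have hb : actOn k A H (actL k A H γ μ) b (h * g) = actL k A H γ μ ((h * g) ⊗ₜ[k] b) := rfl
    rw [hb, actL_apply γ μ b
        (mulRepr (Coalgebra.Repr.arbitrary k h) (Coalgebra.Repr.arbitrary k g)),
      conv_apply_repr Γ' (β ∘ₗ M')
        (tensorRepr (Coalgebra.Repr.arbitrary k h) (Coalgebra.Repr.arbitrary k g))]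
    simp only [tensorRepr, mulRepr, hΓ'def, hM'def, hβdef, LinearMap.comp_apply,
      LinearMap.mul'_apply, LinearMap.mulLeft_apply]
  -- assemble
  have hσ : sigMap k A H γ μ = conv k Γ M' := rfl
  rw [hL, hR, hσ, conv_assoc, conv_assoc]
  rw [mulLeft_conv, ← conv_assoc M Γ M', hMΓ, one_conv, ← conv_assoc M' Γ' (β ∘ₗ M'),
    hM'Γ', one_conv]

end CrossedGalois
end
end
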